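/- Let K = k1/k2 ∈ E(y) be nonzero differential-reduced with gcd(k1,k2)=1, let p ∈ E[y] and m ≥ 1. Then there exist polynomials p1, p2 ∈ E[y] such that p/k2^m = D(p1/k2^{m−1}) + (p1/k2^{m−1})·K + p2/k2 in E(y). -/

import Mathlib

open Polynomial

/-- `K = k1/k2` is differential-reduced: `gcd(k2, k1 - i·D(k2)) = 1` for all integers `i`. -/
def DiffReduced {E : Type*} [Field E] (k1 k2 : E[X]) : Prop :=
  ∀ i : ℤ, IsCoprime k2 (k1 - (i : E[X]) * derivative k2)

/-- The derivation `d/dy` on the field of rational functions `E(y)`. -/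
noncomputable def Dr {E : Type*} [Field E] (f : RatFunc E) : RatFunc E :=
  (algebraMap E[X] (RatFunc E) (derivative f.num) * algebraMap E[X] (RatFunc E) f.denom -
      algebraMap E[X] (RatFunc E) f.num * algebraMap E[X] (RatFunc E) (derivative f.denom)) /
    (algebraMap E[X] (RatFunc E) f.denom) ^ 2

/-- `Dr` computes by the quotient rule on any representation `a / b` with `b ≠ 0`. -/
lemma Dr_div {E : Type*} [Field E] (a b : E[X]) (hb : b ≠ 0) :
    Dr (algebraMap E[X] (RatFunc E) a / algebraMap E[X] (RatFunc E) b) =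
      (algebraMap E[X] (RatFunc E) (derivative a) * algebraMap E[X] (RatFunc E) b -
        algebraMap E[X] (RatFunc E) a * algebraMap E[X] (RatFunc E) (derivative b)) /
        (algebraMap E[X] (RatFunc E) b) ^ 2 := by
  have key : ∀ N D : E[X], D ≠ 0 → a * D = N * b →
      (algebraMap E[X] (RatFunc E) (derivative N) * algebraMap E[X] (RatFunc E) D -
        algebraMap E[X] (RatFunc E) N * algebraMap E[X] (RatFunc E) (derivative D)) /
        (algebraMap E[X] (RatFunc E) D) ^ 2 =
      (algebraMap E[X] (RatFunc E) (derivative a) * algebraMap E[X] (RatFunc E) b -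
        algebraMap E[X] (RatFunc E) a * algebraMap E[X] (RatFunc E) (derivative b)) /
        (algebraMap E[X] (RatFunc E) b) ^ 2 := by
    intro N D hD hcross
    have hd := congrArg derivative hcross
    simp only [derivative_mul] at hd
    have hbm : algebraMap E[X] (RatFunc E) b ≠ 0 := RatFunc.algebraMap_ne_zero hb
    have hDm : algebraMap E[X] (RatFunc E) D ≠ 0 := RatFunc.algebraMap_ne_zero hD
    have H1 : algebraMap E[X] (RatFunc E) a * algebraMap E[X] (RatFunc E) D =
        algebraMap E[X] (RatFunc E) N * algebraMap E[X] (RatFunc E) b := by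
      rw [← map_mul, ← map_mul, hcross]
    have H2 : algebraMap E[X] (RatFunc E) (derivative a) * algebraMap E[X] (RatFunc E) D +
        algebraMap E[X] (RatFunc E) a * algebraMap E[X] (RatFunc E) (derivative D) =
        algebraMap E[X] (RatFunc E) (derivative N) * algebraMap E[X] (RatFunc E) b +
        algebraMap E[X] (RatFunc E) N * algebraMap E[X] (RatFunc E) (derivative b) := by
      rw [← map_mul, ← map_mul, ← map_mul, ← map_mul, ← map_add, ← map_add, hd]
    rw [div_eq_div_iff (pow_ne_zero 2 hDm) (pow_ne_zero 2 hbm)]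
    linear_combination (algebraMap E[X] (RatFunc E) (derivative b) * algebraMap E[X] (RatFunc E) D +
        algebraMap E[X] (RatFunc E) b * algebraMap E[X] (RatFunc E) (derivative D)) * H1 -
      (algebraMap E[X] (RatFunc E) b * algebraMap E[X] (RatFunc E) D) * H2
  set f := algebraMap E[X] (RatFunc E) a / algebraMap E[X] (RatFunc E) b with hf
  have hD : f.denom ≠ 0 := f.denom_ne_zero
  have hbm : algebraMap E[X] (RatFunc E) b ≠ 0 := RatFunc.algebraMap_ne_zero hb
  have hDm : algebraMap E[X] (RatFunc E) f.denom ≠ 0 := RatFunc.algebraMap_ne_zero hD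
  have hcross : a * f.denom = f.num * b := by
    have h1 : algebraMap E[X] (RatFunc E) a / algebraMap E[X] (RatFunc E) b =
        algebraMap E[X] (RatFunc E) f.num / algebraMap E[X] (RatFunc E) f.denom := by
      rw [RatFunc.num_div_denom]
    rw [div_eq_div_iff hbm hDm] at h1
    apply RatFunc.algebraMap_injective
    rw [map_mul, map_mul, h1]
  exact key f.num f.denom hD hcross

/-- Polynomial-level Hermite-style reduction by induction on the power `n`. -/
lemma poly_key {E : Type*} [Field E] (k1 k2 : E[X]) (hdr : DiffReduced k1 k2) :
    ∀ n : ℕ, ∀ p : E[X], ∃ p1 p2 : E[X],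
      p = derivative p1 * k2 + p1 * (k1 - (n : E[X]) * derivative k2) + p2 * k2 ^ n := by
  intro n
  induction n with
  | zero => intro p; exact ⟨0, p, by simp⟩
  | succ n ih =>
    intro p
    obtain ⟨u, v, huv⟩ := hdr (n + 1)
    have hbez : (p * u) * k2 + (p * v) * (k1 - ((n : E[X]) + 1) * derivative k2) = p := by
      push_cast at huv ⊢
      linear_combination p * huv
    obtain ⟨q1, q2, hq⟩ := ih (p * u - derivative (p * v))
    refine ⟨p * v + q1 * k2, q2, ?_⟩
    have hder : derivative (p * v + q1 * k2) =
        derivative (p * v) + derivative q1 * k2 + q1 * derivative k2 := by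
      simp [derivative_mul]; ring
    rw [hder]
    push_cast
    linear_combination -hbez + k2 * hq

lemma mul_derivative_pow {E : Type*} [Field E] (k2 : E[X]) (n : ℕ) :
    k2 * derivative (k2 ^ n) = (n : E[X]) * k2 ^ n * derivative k2 := by
  cases n with
  | zero => simp
  | succ n =>
    rw [derivative_pow, Nat.add_sub_cancel, Polynomial.C_eq_natCast]
    push_cast
    ring

theorem stmt_8 {E : Type*} [Field E] [CharZero E] (k1 k2 : E[X]) (hk1 : k1 ≠ 0)
    (hk2 : k2 ≠ 0) (hcop : IsCoprime k1 k2) (hdr : DiffReduced k1 k2)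
    (p : E[X]) (m : ℕ) (hm : 1 ≤ m) :
    ∃ p1 p2 : E[X],
      algebraMap E[X] (RatFunc E) p / (algebraMap E[X] (RatFunc E) k2) ^ m =
        Dr (algebraMap E[X] (RatFunc E) p1 / (algebraMap E[X] (RatFunc E) k2) ^ (m - 1)) +
          (algebraMap E[X] (RatFunc E) p1 / (algebraMap E[X] (RatFunc E) k2) ^ (m - 1)) *
            (algebraMap E[X] (RatFunc E) k1 / algebraMap E[X] (RatFunc E) k2) +
          algebraMap E[X] (RatFunc E) p2 / algebraMap E[X] (RatFunc E) k2 := by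
  obtain ⟨n, rfl⟩ : ∃ n, m = n + 1 := ⟨m - 1, (Nat.succ_pred_eq_of_pos hm).symm⟩
  obtain ⟨p1, p2, hpoly⟩ := poly_key k1 k2 hdr n p
  refine ⟨p1, p2, ?_⟩
  set φ := algebraMap E[X] (RatFunc E) with hφ
  set A := derivative (k2 ^ n) with hA
  have hk2n : k2 ^ n ≠ 0 := pow_ne_zero n hk2
  have hk2m : φ k2 ≠ 0 := RatFunc.algebraMap_ne_zero hk2
  have hKn : φ k2 ^ n ≠ 0 := pow_ne_zero n hk2m
  have hKsucc : φ k2 ^ (n + 1) ≠ 0 := pow_ne_zero _ hk2m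
  have hDr : Dr (φ p1 / φ k2 ^ (n + 1 - 1)) =
      (φ (derivative p1) * φ k2 ^ n - φ p1 * φ A) / (φ k2 ^ n) ^ 2 := by
    rw [Nat.add_sub_cancel, ← map_pow, Dr_div p1 (k2 ^ n) hk2n, ← hA, map_pow]
  rw [hDr, Nat.add_sub_cancel]
  have HA : φ k2 * φ A = (n : RatFunc E) * φ k2 ^ n * φ (derivative k2) := by
    rw [← map_mul, hA, mul_derivative_pow]
    simp only [map_mul, map_pow, map_natCast]
  have Hp : φ p = φ (derivative p1) * φ k2 +
      φ p1 * (φ k1 - (n : RatFunc E) * φ (derivative k2)) + φ p2 * φ k2 ^ n := by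
    rw [hpoly]
    simp only [map_mul, map_add, map_sub, map_pow, map_natCast]
  have h1 : (φ (derivative p1) * φ k2 ^ n - φ p1 * φ A) / (φ k2 ^ n) ^ 2 =
      (φ (derivative p1) * φ k2 - (n : RatFunc E) * φ p1 * φ (derivative k2)) /
        φ k2 ^ (n + 1) := by
    rw [div_eq_div_iff (pow_ne_zero 2 hKn) hKsucc]
    linear_combination (- (φ k2 ^ n * φ p1)) * HA
  have h2 : φ p1 / φ k2 ^ n * (φ k1 / φ k2) = φ p1 * φ k1 / φ k2 ^ (n + 1) := by
    rw [div_mul_div_comm, pow_succ]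
  have h3 : φ p2 / φ k2 = φ p2 * φ k2 ^ n / φ k2 ^ (n + 1) := by
    rw [div_eq_div_iff hk2m hKsucc]
    ring
  rw [h1, h2, h3, ← add_div, ← add_div, div_eq_div_iff hKsucc hKsucc]
  linear_combination (φ k2 ^ (n + 1)) * Hp
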